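/- Let q be an odd prime power, let m ≥ 4 be an even integer, and let n = (q^m − 1)/(q − 1). Let a be an integer with q^{(m−2)/2} ≤ a ≤ q^{m/2} and a ≢ 0 (mod q). Then a is the coset leader of its q-cyclotomic coset C_a modulo n if and only if a is not of the form a = (i+1) + i(q^{m/2} − q)/(q − 1) for some integer i with (q+1)/2 ≤ i ≤ q − 2 (so for q = 3 every such a is a coset leader). Moreover, if a is a coset leader, then |C_a| = m, except when a = (q^{m/2} + 1)/2, in which case |C_a| = m/2. -/

import Mathlib

/-- The `q`-cyclotomic coset of `a` modulo `n`. -/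
def cosetC (q n a : ℕ) : Set ℕ := {b | ∃ j : ℕ, b = a * q ^ j % n}

namespace CosetAux

variable {q s n a : ℕ}

lemma hn_mul (hn : n = (q ^ (2*s) - 1) / (q - 1)) :
    (q - 1) * n = q ^ (2*s) - 1 := by
  rw [hn]
  refine Nat.mul_div_cancel' ?_
  simpa using Nat.sub_dvd_pow_sub_pow q 1 (2*s)

lemma n_ge (hq : 3 ≤ q) (hs : 1 ≤ s) (hn' : (q - 1) * n = q ^ (2*s) - 1) :
    q ^ (2*s - 1) ≤ n := by
  have h1 : (q-1) * q ^ (2*s-1) ≤ (q-1) * n := by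
    rw [hn']
    have h3 : q ^ (2*s) = q * q ^ (2*s-1) := by
      rw [← pow_succ']; congr 1; omega
    have h2 : 1 ≤ q ^ (2*s-1) := Nat.one_le_pow _ _ (by omega)
    have h4 := Nat.sub_mul q 1 (q ^ (2*s-1))
    rw [h3]
    generalize q ^ (2*s-1) = P at *
    omega
  exact Nat.le_of_mul_le_mul_left h1 (by omega)

lemma mod_transfer (hn' : (q - 1) * n = q ^ (2*s) - 1) (x : ℕ) :
    (q - 1) * (x % n) = ((q - 1) * x) % (q ^ (2*s) - 1) := by
  rw [← hn', Nat.mul_mod_mul_left]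

lemma q_lt_pow (hq : 3 ≤ q) (hs : 2 ≤ s) : q < q ^ s := by
  calc q = q ^ 1 := (pow_one q).symm
  _ < q ^ s := Nat.pow_lt_pow_right (by omega) (by omega)

lemma L_low (hq : 3 ≤ q) (hs : 2 ≤ s) (hn' : (q - 1) * n = q ^ (2*s) - 1)
    (ha : a < q ^ s) {j : ℕ} (hj : j < s) :
    a * q ^ j % n = a * q ^ j := by
  apply Nat.mod_eq_of_lt
  calc a * q ^ j < q ^ s * q ^ j := by
        exact (Nat.mul_lt_mul_right (Nat.pow_pos (by omega))).mpr ha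
    _ ≤ q ^ s * q ^ (s-1) := by
        apply Nat.mul_le_mul_left
        exact Nat.pow_le_pow_right (by omega) (by omega)
    _ = q ^ (2*s - 1) := by rw [← pow_add]; congr 1; omega
    _ ≤ n := n_ge hq (by omega) hn'

lemma a_lt_n (hq : 3 ≤ q) (hs : 2 ≤ s) (hn' : (q - 1) * n = q ^ (2*s) - 1)
    (ha : a < q ^ s) : a < n := by
  calc a < q ^ s := ha
  _ ≤ q ^ (2*s-1) := Nat.pow_le_pow_right (by omega) (by omega)
  _ ≤ n := n_ge hq (by omega) hn'

lemma k_lt (hq : 3 ≤ q) (ha : a < q ^ s) :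
    ((q-1)*a) / q ^ s < q - 1 := by
  rw [Nat.div_lt_iff_lt_mul (Nat.pow_pos (by omega))]
  calc (q-1)*a < (q-1)*(q ^ s) := (Nat.mul_lt_mul_left (by omega)).mpr ha
  _ = (q-1)*q^s := rfl

lemma dvd_of_dvd_qsub1_mul (hq : 3 ≤ q) (h : q ∣ (q-1) * a) : q ∣ a := by
  have h2 : q ∣ q * a := Dvd.intro a rfl
  have h4 : q * a - (q-1) * a = a := by
    have h6 := Nat.sub_mul q (q-1) a
    have h5 : q - (q-1) = 1 := by omega
    rw [h5, one_mul] at h6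
    omega
  have := Nat.dvd_sub h2 h
  rwa [h4] at this

/-- computation of `a q^s mod n`, scaled by `q-1`. -/
lemma mid_eq (hq : 3 ≤ q) (hs : 2 ≤ s) (hn' : (q - 1) * n = q ^ (2*s) - 1)
    {k r : ℕ} (hA : (q-1)*a = q^s * k + r) (hr : r < q^s) (hk : k ≤ q - 2) :
    (q - 1) * (a * q ^ s % n) = r * q ^ s + k := by
  have h3 : q ^ (2*s) = q^s * q^s := by rw [← pow_add]; congr 1; omega
  have hQq : q < q ^ s := q_lt_pow hq hs
  have hvlt : r * q ^ s + k < q ^ (2*s) - 1 := by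
    have h1 : (r+1) * q ^ s ≤ q ^ s * q ^ s := Nat.mul_le_mul_right _ (by omega)
    have h2 : (r+1) * q ^ s = r * q ^ s + 1 * q ^ s := add_mul _ _ _
    omega
  have hAq : (q-1)*a * q^s = q^s * q^s * k + r * q^s := by rw [hA]; ring
  have hM1 : 1 ≤ q^s*q^s := Nat.mul_pos (by omega) (by omega)
  have hsub : (q^s*q^s - 1)*k + 1*k = q^s*q^s*k := by
    rw [← add_mul]
    congr 1
    omega
  calc (q-1) * (a * q^s % n) = ((q-1)*(a * q^s)) % (q^(2*s) - 1) := mod_transfer hn' _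
  _ = ((q^(2*s)-1)*k + (r*q^s + k)) % (q^(2*s) - 1) := by
      congr 1
      rw [← mul_assoc, h3]
      omega
  _ = (r*q^s + k) % (q^(2*s)-1) := Nat.mul_add_mod _ _ _
  _ = r*q^s + k := Nat.mod_eq_of_lt hvlt

/-- high shifts `s < s+t < 2s` give values strictly larger than `(q-1)a`. -/
lemma L_high (hq : 3 ≤ q) (hs : 2 ≤ s) (hn' : (q - 1) * n = q ^ (2*s) - 1)
    (ha : a < q ^ s) (hnd : ¬ q ∣ a) {t : ℕ} (ht1 : 1 ≤ t) (ht2 : t < s) :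
    (q-1) * a < (q-1) * (a * q ^ (s+t) % n) := by
  have hQpos : 0 < q ^ s := Nat.pow_pos (by omega)
  obtain ⟨k, r, hA, hrlt, hkle⟩ : ∃ k r, (q-1)*a = q^s*k + r ∧ r < q^s ∧ k ≤ q-2 := by
    refine ⟨((q-1)*a)/q^s, ((q-1)*a) % q^s, (Nat.div_add_mod _ _).symm, Nat.mod_lt _ hQpos, ?_⟩
    have := k_lt hq ha
    omega
  have hqr : ¬ q ∣ r := by
    intro hd
    apply hnd
    apply dvd_of_dvd_qsub1_mul hq
    rw [hA]
    exact dvd_add (Dvd.dvd.mul_right (dvd_pow_self q (by omega : s ≠ 0)) k) hd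
  have hQtpos : 0 < q ^ (s-t) := Nat.pow_pos (by omega)
  obtain ⟨r1, r0, hrd, hr0lt, hr1lt⟩ : ∃ r1 r0, r = q^(s-t)*r1 + r0 ∧ r0 < q^(s-t) ∧ r1 < q^t := by
    refine ⟨r / q^(s-t), r % q^(s-t), (Nat.div_add_mod _ _).symm, Nat.mod_lt _ hQtpos, ?_⟩
    rw [Nat.div_lt_iff_lt_mul hQtpos]
    calc r < q ^ s := hrlt
    _ = q^t * q^(s-t) := by rw [← pow_add]; congr 1; omega
  have hr0pos : 0 < r0 := by
    rcases Nat.eq_zero_or_pos r0 with h | h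
    · exfalso
      apply hqr
      have : q^(s-t) ∣ r := by rw [hrd, h, add_zero]; exact Dvd.intro r1 rfl
      exact dvd_trans (dvd_pow_self q (by omega)) this
    · exact h
  -- powers in terms of X = q^t, Y = q^(s-t)
  have e1 : q^s = q^(s-t) * q^t := by rw [← pow_add]; congr 1; omega
  have e2 : q^(s+t) = q^(s-t) * q^t * q^t := by rw [← pow_add, ← pow_add]; congr 1; omega
  have e3 : q^(2*s) = q^(s-t) * q^t * (q^(s-t) * q^t) := by
    rw [← pow_add, ← pow_add]
    first
    | (congr 1; omega)
    | (rw [← pow_add]; congr 1; omega)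
  have hid : (q-1)*a * q^(s+t) = q^(2*s) * (k*q^t + r1) + r0 * q^(s+t) := by
    rw [hA, hrd, e3, e2, e1]; ring
  -- the bound on V
  have hb : r0 * q^(s+t) + (k*q^t + r1) < q^(2*s) - 1 := by
    have b1 : (r0+1) * q^(s+t) ≤ q^(s-t) * q^(s+t) := Nat.mul_le_mul_right _ (by omega)
    have b2 : (r0+1) * q^(s+t) = r0 * q^(s+t) + 1 * q^(s+t) := add_mul _ _ _
    have b3 : q^(s-t) * q^(s+t) = q^(2*s) := by rw [← pow_add]; congr 1; omega
    have b4 : (k+2)*q^t ≤ q*q^t := Nat.mul_le_mul_right _ (by omega)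
    have b4' : (k+2)*q^t = k*q^t + 2*q^t := add_mul _ _ _
    have b6 : q*q^t = q^(t+1) := by rw [pow_succ]; ring
    have b7 : q^(t+1) ≤ q^(s+t) := Nat.pow_le_pow_right (by omega) (by omega)
    have b9 : 1 ≤ q^t := Nat.one_le_pow _ _ (by omega)
    omega
  have hval : (q-1) * (a * q^(s+t) % n) = r0 * q^(s+t) + (k*q^t + r1) := by
    calc (q-1) * (a * q^(s+t) % n) = ((q-1)*(a * q^(s+t))) % (q^(2*s) - 1) := mod_transfer hn' _
    _ = ((q^(2*s)-1)*(k*q^t + r1) + (r0*q^(s+t) + (k*q^t + r1))) % (q^(2*s) - 1) := by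
        congr 1
        have hM1 : 1 ≤ q^(2*s) := Nat.one_le_pow _ _ (by omega)
        have hsub : (q^(2*s)-1)*(k*q^t + r1) + 1*(k*q^t + r1) = q^(2*s)*(k*q^t + r1) := by
          rw [← add_mul]
          congr 1
          omega
        rw [← mul_assoc]
        omega
    _ = (r0*q^(s+t) + (k*q^t + r1)) % (q^(2*s)-1) := Nat.mul_add_mod _ _ _
    _ = r0*q^(s+t) + (k*q^t + r1) := Nat.mod_eq_of_lt hb
  rw [hval]
  have hlow : (q-1)*a < q^(s+t) := by
    calc (q-1)*a < (q-1)*q^s := (Nat.mul_lt_mul_left (by omega)).mpr ha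
    _ ≤ q * q^s := Nat.mul_le_mul_right _ (by omega)
    _ = q^(s+1) := by rw [pow_succ]; ring
    _ ≤ q^(s+t) := Nat.pow_le_pow_right (by omega) (by omega)
  calc (q-1)*a < q^(s+t) := hlow
  _ ≤ r0 * q^(s+t) := Nat.le_mul_of_pos_left _ hr0pos
  _ ≤ r0 * q^(s+t) + (k*q^t + r1) := Nat.le_add_right _ _

lemma hq2s_modeq (hq : 3 ≤ q) (hs : 2 ≤ s) (hn' : (q - 1) * n = q ^ (2*s) - 1) :
    q ^ (2*s) ≡ 1 [MOD n] := by
  have h1 : 1 ≤ q ^ (2*s) := Nat.one_le_pow _ _ (by omega)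
  exact ((Nat.modEq_iff_dvd' h1).mpr (Dvd.intro_left (q-1) hn')).symm

lemma L_red (hq : 3 ≤ q) (hs : 2 ≤ s) (hn' : (q - 1) * n = q ^ (2*s) - 1) (j : ℕ) :
    a * q ^ j % n = a * q ^ (j % (2*s)) % n := by
  have hmod := hq2s_modeq hq hs hn'
  have h1 : a * q ^ j = a * q ^ (j % (2*s)) * (q^(2*s))^(j/(2*s)) := by
    rw [mul_assoc, ← pow_mul, ← pow_add]
    congr 2
    have := Nat.div_add_mod j (2*s)
    omega
  calc a * q ^ j % n = (a * q ^ (j % (2*s)) * (q^(2*s))^(j/(2*s))) % n := by rw [h1]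
  _ = (a * q ^ (j % (2*s)) * 1^(j/(2*s))) % n := (hmod.pow _).mul_left _
  _ = a * q ^ (j % (2*s)) % n := by rw [one_pow, mul_one]

lemma unique_div {Q k r i r' : ℕ} (hQ : 0 < Q) (h : Q*k + r = Q*i + r') (hr : r < Q) (hr' : r' < Q) :
    k = i ∧ r = r' := by
  have h1 : (Q*k + r)/Q = k + r/Q := Nat.mul_add_div hQ _ _
  have h2 : (Q*i + r')/Q = i + r'/Q := Nat.mul_add_div hQ _ _
  have h3 : r/Q = 0 := Nat.div_eq_of_lt hr
  have h4 : r'/Q = 0 := Nat.div_eq_of_lt hr'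
  have hk : k = i := by rw [h3] at h1; rw [h4] at h2; rw [h] at h1; omega
  subst hk
  exact ⟨rfl, by omega⟩


lemma dvd_qs_sub_one (hq : 3 ≤ q) (s : ℕ) : (q-1) ∣ q^s - 1 := by
  simpa using Nat.sub_dvd_pow_sub_pow q 1 s

lemma dvd_qs_sub_q (hq : 3 ≤ q) (hs : 2 ≤ s) : (q-1) ∣ q^s - q := by
  have h1 := Nat.dvd_sub (dvd_qs_sub_one hq s) (dvd_refl (q-1))
  have h2 : q ≤ q ^ s := le_of_lt (q_lt_pow hq hs)
  have h3 : q ^ s - 1 - (q-1) = q^s - q := by omega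
  rwa [h3] at h1

/-- from `r < k` (at shift `s`), `a` has the special form. -/
lemma spec_of_lt (hq : 3 ≤ q) (hs : 2 ≤ s) (hqodd : q % 2 = 1)
    {k r : ℕ} (hA : (q-1)*a = q^s * k + r) (hrlt : r < q^s) (hkle : k ≤ q - 2)
    (hrnd : ¬ q ∣ r) (hlt : r < k) :
    ∃ i : ℕ, (q + 1) / 2 ≤ i ∧ i ≤ q - 2 ∧ a = (i + 1) + i * ((q ^ s - q) / (q - 1)) := by
  have hqs1 : 1 ≤ q ^ s := Nat.one_le_pow _ _ (by omega)
  have hd2 : (q-1) ∣ q^s - 1 := dvd_qs_sub_one hq s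
  have hid : (q^s - 1)*k + 1*k = q^s*k := by
    rw [← add_mul]; congr 1; omega
  have hd3 : (q-1) ∣ (q^s-1)*k := hd2.mul_right k
  have hd4 : (q-1) ∣ k + r := by
    have h5 : (q-1) ∣ (q^s-1)*k + (k+r) := by
      have h6 : (q^s-1)*k + (k+r) = (q-1)*a := by rw [hA]; omega
      rw [h6]; exact dvd_mul_right _ _
    exact (Nat.dvd_add_right hd3).mp h5
  have hrpos : 0 < r := by
    rcases Nat.eq_zero_or_pos r with h | h
    · exact absurd (h ▸ dvd_zero q) hrnd
    · exact h
  obtain ⟨c, hc⟩ := hd4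
  have hkr : k + r = q - 1 := by
    rcases c with _ | c
    · simp at hc; omega
    rcases c with _ | c
    · omega
    · exfalso
      have := Nat.mul_le_mul_left (q-1) (show 2 ≤ c+1+1 by omega)
      omega
  have h2k : q + 1 ≤ 2*k := by omega
  have hqle : q ≤ q ^ s := le_of_lt (q_lt_pow hq hs)
  have hDdvd : (q-1) ∣ q^s - q := dvd_qs_sub_q hq hs
  have hD : (q-1)*((q^s - q)/(q-1)) = q^s - q := Nat.mul_div_cancel' hDdvd
  refine ⟨k, by omega, by omega, ?_⟩
  have key : (q-1)*a = (q-1)*((k+1) + k*((q^s - q)/(q-1))) := by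
    have e4 : (q-1)*((k+1) + k*((q^s - q)/(q-1))) = (q-1)*(k+1) + k*((q-1)*((q^s - q)/(q-1))) := by
      ring
    rw [e4, hD, hA]
    have e5 : k*(q^s - q) + k*q = k*q^s := by rw [← Nat.mul_add]; congr 1; omega
    have e6 : (q-1)*(k+1) + 1*(k+1) = q*(k+1) := by rw [← add_mul]; congr 1; omega
    have e7 : q*(k+1) = q*k + q := by ring
    have e8 : k*q = q*k := mul_comm _ _
    have e9 : q^s*k = k*q^s := mul_comm _ _
    omega
  exact Nat.eq_of_mul_eq_mul_left (by omega) key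

/-- from the special form, the shift by `s` is strictly smaller. -/
lemma lt_of_spec (hq : 3 ≤ q) (hs : 2 ≤ s) (hqodd : q % 2 = 1)
    (hn' : (q - 1) * n = q ^ (2*s) - 1) (halt : a < q ^ s)
    {i : ℕ} (hi1 : (q + 1) / 2 ≤ i) (hi2 : i ≤ q - 2)
    (hie : a = (i + 1) + i * ((q ^ s - q) / (q - 1))) :
    a * q ^ s % n < a := by
  have hqle : q ≤ q ^ s := le_of_lt (q_lt_pow hq hs)
  have hDdvd : (q-1) ∣ q^s - q := dvd_qs_sub_q hq hs
  have hD : (q-1)*((q^s - q)/(q-1)) = q^s - q := Nat.mul_div_cancel' hDdvd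
  have h2i : q + 1 ≤ 2*i := by omega
  have hA : (q-1)*a = q^s*i + (q-1-i) := by
    have e4 : (q-1)*((i+1) + i*((q^s - q)/(q-1))) = (q-1)*(i+1) + i*((q-1)*((q^s - q)/(q-1))) := by
      ring
    rw [hie, e4, hD]
    have e5 : i*(q^s - q) + i*q = i*q^s := by rw [← Nat.mul_add]; congr 1; omega
    have e6 : (q-1)*(i+1) + 1*(i+1) = q*(i+1) := by rw [← add_mul]; congr 1; omega
    have e7 : q*(i+1) = q*i + q := by ring
    have e8 : i*q = q*i := mul_comm _ _
    have e9 : q^s*i = i*q^s := mul_comm _ _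
    omega
  have hmid := mid_eq hq hs hn' hA (by omega) (by omega)
  have hcmp : (q-1-i)*q^s + i < q^s*i + (q-1-i) := by
    have f1 : (q-1-i+2)*q^s ≤ i*q^s := Nat.mul_le_mul_right _ (by omega)
    have f2 : (q-1-i+2)*q^s = (q-1-i)*q^s + 2*q^s := add_mul _ _ _
    have f3 : q^s*i = i*q^s := mul_comm _ _
    have f4 : i < q^s := by omega
    omega
  have : (q-1)*(a * q^s % n) < (q-1)*a := by rw [hmid, hA]; exact hcmp
  exact lt_of_mul_lt_mul_left this (Nat.zero_le _)

/-- if `a` is not of the special form then the shift by `s` is at least `a`. -/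
lemma mid_ge (hq : 3 ≤ q) (hs : 2 ≤ s) (hqodd : q % 2 = 1)
    (hn' : (q - 1) * n = q ^ (2*s) - 1) (halt : a < q ^ s) (hnd : ¬ q ∣ a)
    (hno : ¬ ∃ i : ℕ, (q + 1) / 2 ≤ i ∧ i ≤ q - 2 ∧
        a = (i + 1) + i * ((q ^ s - q) / (q - 1))) :
    a ≤ a * q ^ s % n := by
  have hQpos : 0 < q ^ s := Nat.pow_pos (by omega)
  obtain ⟨k, r, hA, hrlt, hkle⟩ : ∃ k r, (q-1)*a = q^s*k + r ∧ r < q^s ∧ k ≤ q-2 := by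
    refine ⟨((q-1)*a)/q^s, ((q-1)*a) % q^s, (Nat.div_add_mod _ _).symm, Nat.mod_lt _ hQpos, ?_⟩
    have := k_lt hq halt
    omega
  have hrnd : ¬ q ∣ r := by
    intro hd
    apply hnd
    apply dvd_of_dvd_qsub1_mul hq
    rw [hA]
    exact dvd_add (Dvd.dvd.mul_right (dvd_pow_self q (by omega : s ≠ 0)) k) hd
  have hkr : k ≤ r := by
    by_contra h
    exact hno (spec_of_lt hq hs hqodd hA hrlt hkle hrnd (by omega))
  have hmid := mid_eq hq hs hn' hA hrlt hkle
  have hcmp : q^s*k + r ≤ r*q^s + k := by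
    obtain ⟨d, rfl⟩ := Nat.exists_eq_add_of_le hkr
    have e : (k+d)*q^s = k*q^s + d*q^s := add_mul _ _ _
    have b1 : q^s*k = k*q^s := mul_comm _ _
    have f1 : d*1 ≤ d*q^s := Nat.mul_le_mul_left d (by omega)
    omega
  have : (q-1)*a ≤ (q-1)*(a * q^s % n) := by rw [hmid, hA]; exact hcmp
  exact Nat.le_of_mul_le_mul_left this (by omega)

/-- the fixed-point criterion at shift `s`. -/
lemma Fs_eq_iff (hq : 3 ≤ q) (hs : 2 ≤ s) (hqodd : q % 2 = 1)
    (hn' : (q - 1) * n = q ^ (2*s) - 1) (halt : a < q ^ s) (hnd : ¬ q ∣ a)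
    (hqa : q ≤ a) :
    a * q ^ s % n = a ↔ 2*a = q^s + 1 := by
  have hQpos : 0 < q ^ s := Nat.pow_pos (by omega)
  have hqs1 : 1 ≤ q ^ s := hQpos
  have hqle : q < q ^ s := q_lt_pow hq hs
  obtain ⟨k, r, hA, hrlt, hkle⟩ : ∃ k r, (q-1)*a = q^s*k + r ∧ r < q^s ∧ k ≤ q-2 := by
    refine ⟨((q-1)*a)/q^s, ((q-1)*a) % q^s, (Nat.div_add_mod _ _).symm, Nat.mod_lt _ hQpos, ?_⟩
    have := k_lt hq halt
    omega
  have hmid := mid_eq hq hs hn' hA hrlt hkle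
  constructor
  · intro h
    rw [h, hA] at hmid
    -- q^s*k + r = r*q^s + k
    have hcm : q^s*r = r*q^s := mul_comm _ _
    obtain ⟨hk, hrr⟩ := unique_div hQpos (by omega : q^s*k + r = q^s*r + k) hrlt (by omega)
    -- k = r
    subst hk
    have hd2 : (q-1) ∣ q^s - 1 := dvd_qs_sub_one hq s
    have hd3 : (q-1) ∣ (q^s-1)*k := hd2.mul_right k
    have h5 : (q-1) ∣ (q^s-1)*k + 2*k := by
      have hid : (q^s - 1)*k + 1*k = q^s*k := by rw [← add_mul]; congr 1; omega
      have h6 : (q^s-1)*k + 2*k = (q-1)*a := by rw [hA]; omega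
      rw [h6]; exact dvd_mul_right _ _
    have hd4 : (q-1) ∣ 2*k := (Nat.dvd_add_right hd3).mp h5
    obtain ⟨c, hc⟩ := hd4
    have hapos : 0 < (q-1)*a := Nat.mul_pos (by omega) (by omega)
    rcases c with _ | c
    · have hk0 : k = 0 := by simpa using hc
      subst hk0
      simp only [Nat.mul_zero, Nat.add_zero, Nat.zero_add] at hA
      omega
    rcases c with _ | c
    · -- 2k = q-1
      have hc1 : 2*k = q-1 := by omega
      have key : (q-1)*(2*a) = (q-1)*(q^s+1) := by
        calc (q-1)*(2*a) = 2*((q-1)*a) := by ring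
        _ = 2*(q^s*k + k) := by rw [hA]
        _ = q^s*(2*k) + 2*k := by ring
        _ = q^s*(q-1) + (q-1) := by rw [hc1]
        _ = (q-1)*(q^s+1) := by ring
      exact Nat.eq_of_mul_eq_mul_left (by omega) key
    · exfalso
      have := Nat.mul_le_mul_left (q-1) (show 2 ≤ c+1+1 by omega)
      omega
  · intro h2a
    have hu : 2*((q-1)/2) = q-1 := by omega
    have hAu : (q-1)*a = q^s*((q-1)/2) + (q-1)/2 := by
      have key : 2*((q-1)*a) = 2*(q^s*((q-1)/2) + (q-1)/2) := by
        calc 2*((q-1)*a) = (q-1)*(2*a) := by ring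
        _ = (q-1)*(q^s+1) := by rw [h2a]
        _ = q^s*(q-1) + (q-1) := by ring
        _ = q^s*(2*((q-1)/2)) + 2*((q-1)/2) := by rw [hu]
        _ = 2*(q^s*((q-1)/2) + (q-1)/2) := by ring
      omega
    obtain ⟨hk, hr⟩ := unique_div hQpos (hA.symm.trans hAu) hrlt (by omega)
    rw [hk, hr] at hmid
    have : (q-1)*(a * q^s % n) = (q-1)*a := by
      rw [hmid, hAu, mul_comm]
    exact Nat.eq_of_mul_eq_mul_left (by omega) this

/-- the coset is the image of `[0, d)` whenever `a q^d ≡ a`. -/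
lemma coset_image (hq : 3 ≤ q) (hs : 2 ≤ s) (hn' : (q - 1) * n = q ^ (2*s) - 1)
    (haln : a < n) {d : ℕ} (hd : 0 < d) (had : a * q ^ d % n = a) :
    cosetC q n a = (fun j => a * q ^ j % n) '' ↑(Finset.range d) := by
  have hmd : (a * q^d) % n = a % n := by rw [had, Nat.mod_eq_of_lt haln]
  have per : ∀ c u, a * q^(d*c + u) % n = a * q^u % n := by
    intro c
    induction c with
    | zero => intro u; simp
    | succ c ih =>
        intro u
        have h1 : a * q^(d*(c+1) + u) = (a*q^d) * q^(d*c+u) := by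
          rw [mul_assoc, ← pow_add]
          congr 2
          ring
        calc a * q^(d*(c+1)+u) % n = (a*q^d)*q^(d*c+u) % n := by rw [h1]
        _ = a * q^(d*c+u) % n := Nat.ModEq.mul_right _ hmd
        _ = a*q^u % n := ih u
  ext b
  simp only [cosetC, Set.mem_setOf_eq, Set.mem_image, Finset.coe_range, Set.mem_Iio]
  constructor
  · rintro ⟨j, rfl⟩
    refine ⟨j % d, Nat.mod_lt _ hd, ?_⟩
    have h := per (j/d) (j%d)
    rw [Nat.div_add_mod] at h
    exact h.symm
  · rintro ⟨j', _, rfl⟩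
    exact ⟨j', rfl⟩

/-- injectivity on `[0, d)` when no smaller positive shift fixes `a`. -/
lemma inj_on_range (hq : 3 ≤ q) (hs : 2 ≤ s) (hn' : (q - 1) * n = q ^ (2*s) - 1)
    (haln : a < n) {d : ℕ} (hd : d ≤ 2*s)
    (hne : ∀ e, 0 < e → e < d → a * q^e % n ≠ a) :
    Set.InjOn (fun j => a * q ^ j % n) ↑(Finset.range d) := by
  have hmod := hq2s_modeq hq hs hn'
  have key : ∀ j1 j2, j1 ≤ j2 → j2 < d → a*q^j1 % n = a*q^j2 % n → j1 = j2 := by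
    intro j1 j2 hle hlt heq
    have h2 : (a*q^j1)*(q^(2*s - j1)) % n = (a*q^j2)*(q^(2*s - j1)) % n :=
      Nat.ModEq.mul_right _ heq
    have r1 : a*q^j1*q^(2*s-j1) = a * q^(2*s) := by
      rw [mul_assoc, ← pow_add]
      congr 2
      omega
    have r2 : a*q^j2*q^(2*s-j1) = a * q^(j2-j1) * q^(2*s) := by
      rw [mul_assoc, mul_assoc, ← pow_add, ← pow_add]
      congr 2
      omega
    rw [r1, r2] at h2
    have c2 : a * q^(2*s) % n = a % n := by
      have h3 := hmod.mul_left a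
      simpa [Nat.ModEq] using h3
    have c3 : a * q^(j2-j1) * q^(2*s) % n = (a*q^(j2-j1)) % n := by
      have h3 := hmod.mul_left (a*q^(j2-j1))
      simpa [Nat.ModEq] using h3
    have hae : a * q^(j2-j1) % n = a := by
      rw [← c3, ← h2, c2, Nat.mod_eq_of_lt haln]
    by_contra hne'
    exact hne (j2-j1) (by omega) (by omega) hae
  intro j1 hj1 j2 hj2 heq
  simp only [Finset.coe_range, Set.mem_Iio] at hj1 hj2
  rcases le_total j1 j2 with h | h
  · exact key _ _ h hj2 heq
  · exact (key _ _ h hj1 heq.symm).symm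

end CosetAux


open CosetAux in
/-- Lemma 22(2): for `q` an odd prime power, `m ≥ 4` even and `n = (q^m − 1)/(q − 1)`,
an integer `a` with `q^{(m−2)/2} ≤ a ≤ q^{m/2}` and `q ∤ a` is a coset leader iff it is
not of the form `(i+1) + i(q^{m/2} − q)/(q − 1)` with `(q+1)/2 ≤ i ≤ q − 2`; moreover a
coset leader `a` satisfies `|C_a| = m` except for `a = (q^{m/2} + 1)/2`, where
`|C_a| = m/2`. -/
theorem coset_leaders_projective_odd (q m n : ℕ)
    (hq : IsPrimePow q) (hqodd : Odd q) (hm : 4 ≤ m) (hmeven : Even m)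
    (hn : n = (q ^ m - 1) / (q - 1))
    (a : ℕ) (ha1 : q ^ ((m - 2) / 2) ≤ a) (ha2 : a ≤ q ^ (m / 2)) (ha3 : ¬ q ∣ a) :
    ((a ∈ cosetC q n a ∧ ∀ b ∈ cosetC q n a, a ≤ b) ↔
      ¬ ∃ i : ℕ, (q + 1) / 2 ≤ i ∧ i ≤ q - 2 ∧
        a = (i + 1) + i * ((q ^ (m / 2) - q) / (q - 1))) ∧
    ((∀ b ∈ cosetC q n a, a ≤ b) →
      (a ≠ (q ^ (m / 2) + 1) / 2 → (cosetC q n a).ncard = m) ∧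
      (a = (q ^ (m / 2) + 1) / 2 → (cosetC q n a).ncard = m / 2)) := by
  have hq2 : 2 ≤ q := hq.two_le
  have hqodd' : q % 2 = 1 := Nat.odd_iff.mp hqodd
  have hq3 : 3 ≤ q := by omega
  have hm0 : m % 2 = 0 := Nat.even_iff.mp hmeven
  set s := m / 2 with hsdef
  have hm2 : m = 2 * s := by omega
  have hs2 : 2 ≤ s := by omega
  rw [hm2] at hn
  have hn' : (q-1)*n = q^(2*s) - 1 := hn_mul hn
  have ha1' : q^(s-1) ≤ a := by rwa [show (m-2)/2 = s-1 by omega] at ha1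
  have hqa : q ≤ a := by
    refine le_trans ?_ ha1'
    calc q = q ^ 1 := (pow_one q).symm
    _ ≤ q ^ (s-1) := Nat.pow_le_pow_right (by omega) (by omega)
  have halt : a < q^s := by
    rcases lt_or_eq_of_le ha2 with h | h
    · exact h
    · exact absurd (h ▸ dvd_pow_self q (by omega : s ≠ 0)) ha3
  have haln : a < n := a_lt_n hq3 hs2 hn' halt
  have hapos : 0 < a := by omega
  have hqsodd : q^s % 2 = 1 := Nat.odd_iff.mp (hqodd.pow)
  constructor
  · constructor
    · rintro ⟨hmem, hmin⟩ ⟨i, hi1, hi2, hie⟩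
      have hlt := lt_of_spec hq3 hs2 hqodd' hn' halt hi1 hi2 hie
      have := hmin (a * q^s % n) ⟨s, rfl⟩
      omega
    · intro hno
      constructor
      · exact ⟨0, by rw [pow_zero, mul_one, Nat.mod_eq_of_lt haln]⟩
      · rintro b ⟨j, rfl⟩
        rw [L_red hq3 hs2 hn' j]
        have hj' : j % (2*s) < 2*s := Nat.mod_lt _ (by omega)
        rcases lt_trichotomy (j % (2*s)) s with h | h | h
        · rw [L_low hq3 hs2 hn' halt h]
          exact Nat.le_mul_of_pos_right a (Nat.pow_pos (by omega))
        · rw [h]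
          exact mid_ge hq3 hs2 hqodd' hn' halt ha3 hno
        · have hgt := L_high hq3 hs2 hn' halt ha3 (t := j % (2*s) - s) (by omega) (by omega)
          rw [show s + (j % (2*s) - s) = j % (2*s) by omega] at hgt
          exact le_of_lt (lt_of_mul_lt_mul_left hgt (Nat.zero_le _))
  · intro _
    have hFs_iff := Fs_eq_iff hq3 hs2 hqodd' hn' halt ha3 hqa
    have hgt_low : ∀ e, 0 < e → e < s → a*q^e % n ≠ a := by
      intro e he1 he2 h
      rw [L_low hq3 hs2 hn' halt he2] at h
      have h2 : 1 < q^e := Nat.one_lt_pow (by omega) (by omega)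
      have h3 : a*1 < a*q^e := (Nat.mul_lt_mul_left hapos).mpr h2
      omega
    have hgt_high : ∀ e, s < e → e < 2*s → a*q^e % n ≠ a := by
      intro e he1 he2 h
      have hgt := L_high hq3 hs2 hn' halt ha3 (t := e - s) (by omega) (by omega)
      rw [show s + (e-s) = e by omega, h] at hgt
      omega
    constructor
    · intro hne
      have hne2a : ¬ (2*a = q^s + 1) := by intro h; apply hne; omega
      have h2s : a * q^(2*s) % n = a := by
        have h3 := (hq2s_modeq hq3 hs2 hn').mul_left a
        have h4 : a * q^(2*s) % n = a % n := by simpa [Nat.ModEq] using h3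
        rw [h4, Nat.mod_eq_of_lt haln]
      have himg := coset_image hq3 hs2 hn' haln (d := 2*s) (by omega) h2s
      have hinj := inj_on_range hq3 hs2 hn' haln (le_refl (2*s)) (fun e he1 he2 => by
        rcases lt_trichotomy e s with h | h | h
        · exact hgt_low e he1 h
        · rw [h]; intro hh; exact hne2a (hFs_iff.mp hh)
        · exact hgt_high e h he2)
      rw [himg, ← Finset.coe_image, Set.ncard_coe_finset,
        Finset.card_image_of_injOn hinj, Finset.card_range]
      omega
    · intro heq
      have h2a : 2*a = q^s + 1 := by omega
      have hFs : a*q^s % n = a := hFs_iff.mpr h2a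
      have himg := coset_image hq3 hs2 hn' haln (d := s) (by omega) hFs
      have hinj := inj_on_range hq3 hs2 hn' haln (by omega : s ≤ 2*s)
        (fun e he1 he2 => hgt_low e he1 he2)
      rw [himg, ← Finset.coe_image, Set.ncard_coe_finset,
        Finset.card_image_of_injOn hinj, Finset.card_range]
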